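/- Under the RU-QLP setup, for every i = 1,…,k, the sine of the angle between the i-th right singular vector v_i of A and the column space of P satisfies ‖(I − PP^T)v_i‖_2 ≤ δ_i^{2q+1} ‖Φ̂2 Φ̂1^†‖_2 / √(1 + γ^{4q+2} ‖Φ̂2 Φ̂1^†‖_2²). -/

import Mathlib

open Matrix MeasureTheory ProbabilityTheory

noncomputable section

/-- Euclidean norm of a vector. -/
noncomputable def vecNorm {a : ℕ} (v : Fin a → ℝ) : ℝ :=
  Real.sqrt (∑ i, v i ^ 2)

/-- Frobenius norm of a matrix. -/
noncomputable def frobNorm {a b : ℕ} (M : Matrix (Fin a) (Fin b) ℝ) : ℝ :=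
  Real.sqrt (∑ i, ∑ j, M i j ^ 2)

/-- Spectral norm (ℓ² operator norm) of a matrix. -/
noncomputable def specNorm {a b : ℕ} (M : Matrix (Fin a) (Fin b) ℝ) : ℝ :=
  ‖LinearMap.toContinuousLinearMap (Matrix.toEuclideanLin M)‖

/-- `mNorm true` is the spectral norm, `mNorm false` is the Frobenius norm. -/
noncomputable def mNorm (t : Bool) {a b : ℕ} (M : Matrix (Fin a) (Fin b) ℝ) : ℝ :=
  if t then specNorm M else frobNorm M

/-- The `i`-th largest singular value of a matrix (0-indexed, so `sval M 0` is the
largest singular value): the square root of the `i`-th largest eigenvalue of `MᵀM`. -/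
noncomputable def sval {a b : ℕ} (M : Matrix (Fin a) (Fin b) ℝ) (i : Fin b) : ℝ :=
  Real.sqrt ((show (Mᵀ * M).IsHermitian by simpa using Matrix.isHermitian_conjTranspose_mul_self M).eigenvalues
    (Tuple.sort (show (Mᵀ * M).IsHermitian by simpa using Matrix.isHermitian_conjTranspose_mul_self M).eigenvalues i.rev))

/-- The Moore–Penrose pseudoinverse of a full-row-rank matrix. -/
noncomputable def rowPinv {a b : ℕ} (M : Matrix (Fin a) (Fin b) ℝ) : Matrix (Fin b) (Fin a) ℝ :=
  Mᵀ * (M * Mᵀ)⁻¹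

/-- The constant ω = ω₁ω₂, ω₁ = √(m−k) + √(k+p) + 7, ω₂ = 4e√(k+p)/(p+1). -/
noncomputable def omegaConst (m k p : ℕ) : ℝ :=
  (Real.sqrt ((m : ℝ) - (k : ℝ)) + Real.sqrt ((k : ℝ) + (p : ℝ)) + 7) *
    (4 * Real.exp 1 * Real.sqrt ((k : ℝ) + (p : ℝ)) / ((p : ℝ) + 1))

/-- The constant C = √(k/(p−1)) + e√((m−k)(p+k))/p. -/
noncomputable def CConst (m k p : ℕ) : ℝ :=
  Real.sqrt ((k : ℝ) / ((p : ℝ) - 1)) +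
    Real.exp 1 * Real.sqrt (((m : ℝ) - (k : ℝ)) * ((p : ℝ) + (k : ℝ))) / (p : ℝ)



section RUQLPAux

lemma vecNorm_eq_dp {a : ℕ} (v : Fin a → ℝ) : vecNorm v = Real.sqrt (v ⬝ᵥ v) := by
  unfold vecNorm; congr 1; simp [dotProduct, sq]

lemma dp_self_nonneg {a : ℕ} (v : Fin a → ℝ) : 0 ≤ v ⬝ᵥ v :=
  Finset.sum_nonneg fun i _ => mul_self_nonneg _

lemma dp_mulVec_left {a b : ℕ} (M : Matrix (Fin a) (Fin b) ℝ) (s : Fin b → ℝ) (t : Fin a → ℝ) :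
    (M *ᵥ s) ⬝ᵥ t = s ⬝ᵥ (Mᵀ *ᵥ t) := by
  rw [dotProduct_comm, dotProduct_mulVec, ← mulVec_transpose, dotProduct_comm]

lemma proj_le {n d : ℕ} (P : Matrix (Fin n) (Fin d) ℝ) (hP : Pᵀ * P = 1)
    (v : Fin n → ℝ) (c : Fin d → ℝ) :
    vecNorm ((1 - P * Pᵀ) *ᵥ v) ≤ vecNorm (v - P *ᵥ c) := by
  set r := v - P *ᵥ c with hr
  clear_value r
  set s := Pᵀ *ᵥ r with hs
  have hz : (1 - P * Pᵀ) *ᵥ v = r - P *ᵥ s := by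
    have h1 : P *ᵥ s = (P * Pᵀ) *ᵥ v - (P * Pᵀ) *ᵥ (P *ᵥ c) := by
      rw [hs, hr, Matrix.mulVec_sub, Matrix.mulVec_sub, mulVec_mulVec, mulVec_mulVec,
        mulVec_mulVec]
    have h2 : (P * Pᵀ) *ᵥ (P *ᵥ c) = P *ᵥ c := by
      rw [mulVec_mulVec, Matrix.mul_assoc, hP, Matrix.mul_one]
    rw [h1, h2, hr, Matrix.sub_mulVec, Matrix.one_mulVec]
    abel
  clear_value s
  rw [hz, vecNorm_eq_dp, vecNorm_eq_dp]
  apply Real.sqrt_le_sqrt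
  have e2 : (P *ᵥ s) ⬝ᵥ (P *ᵥ s) = s ⬝ᵥ s := by
    rw [dp_mulVec_left, mulVec_mulVec, hP, Matrix.one_mulVec]
  have e1 : (P *ᵥ s) ⬝ᵥ r = s ⬝ᵥ s := by rw [dp_mulVec_left, ← hs]
  have e3 : r ⬝ᵥ (P *ᵥ s) = s ⬝ᵥ s := by rw [dotProduct_comm, e1]
  have : (r - P *ᵥ s) ⬝ᵥ (r - P *ᵥ s) = r ⬝ᵥ r - s ⬝ᵥ s := by
    rw [sub_dotProduct, dotProduct_sub, dotProduct_sub, e2, e3, e1]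
    ring
  rw [this]
  linarith [dp_self_nonneg s]

lemma mulVec_norm_le {a b : ℕ} (M : Matrix (Fin a) (Fin b) ℝ) (x : Fin b → ℝ) :
    vecNorm (M *ᵥ x) ≤ specNorm M * vecNorm x := by
  have h := (LinearMap.toContinuousLinearMap (Matrix.toEuclideanLin M)).le_opNorm
    ((WithLp.equiv 2 (Fin b → ℝ)).symm x)
  have h1 : ‖(LinearMap.toContinuousLinearMap (Matrix.toEuclideanLin M))
      ((WithLp.equiv 2 (Fin b → ℝ)).symm x)‖ = vecNorm (M *ᵥ x) := by
    rw [LinearMap.coe_toContinuousLinearMap']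
    rw [WithLp.equiv_symm_apply, Matrix.toEuclideanLin_apply_piLp_toLp]
    rw [EuclideanSpace.norm_eq]
    unfold vecNorm
    congr 1
    apply Finset.sum_congr rfl
    intro i _
    rw [PiLp.toLp_apply]
    rw [Real.norm_eq_abs, sq_abs]
  have h2 : ‖(WithLp.equiv 2 (Fin b → ℝ)).symm x‖ = vecNorm x := by
    rw [EuclideanSpace.norm_eq]
    unfold vecNorm
    congr 1
    apply Finset.sum_congr rfl
    intro i _
    rw [WithLp.equiv_symm_apply, PiLp.toLp_apply, Real.norm_eq_abs, sq_abs]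
  rw [h1, h2] at h
  exact h

lemma sum_split {n k : ℕ} (h : k ≤ n) (f : Fin n → ℝ) :
    ∑ j, f j = (∑ j : Fin k, f (Fin.castLE h j))
      + ∑ j : Fin (n - k), f ⟨k + j.1, by omega⟩ := by
  have hnk : k + (n - k) = n := by omega
  rw [← Equiv.sum_comp (finSumFinEquiv.trans (finCongr hnk)) f, Fintype.sum_sum_type]
  congr 1
  all_goals
    try (refine Finset.sum_congr rfl fun j _ => ?_; congr 1; ext; simp)

lemma pinv_right {k d : ℕ} (M : Matrix (Fin k) (Fin d) ℝ) (h : M.rank = k) :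
    M * rowPinv M = 1 := by
  have h1 : (M * Mᵀ).rank = k := by rw [Matrix.rank_self_mul_transpose, h]
  have hu : IsUnit (M * Mᵀ) := by
    rw [← Matrix.mulVec_surjective_iff_isUnit]
    have : LinearMap.range (M * Mᵀ).mulVecLin = ⊤ := by
      apply Submodule.eq_top_of_finrank_eq
      rw [← Matrix.rank, h1]
      simp [Module.finrank_pi]
    intro y
    have : y ∈ LinearMap.range (M * Mᵀ).mulVecLin := this ▸ Submodule.mem_top
    obtain ⟨c, hc⟩ := this
    exact ⟨c, hc⟩
  have hdet : IsUnit (M * Mᵀ).det := (Matrix.isUnit_iff_isUnit_det _).mp hu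
  unfold rowPinv
  rw [← Matrix.mul_assoc, Matrix.mul_nonsing_inv _ hdet]


lemma scalar_final (A1 B1 G1 s T : ℝ) (hA : 0 < A1) (hB : 0 ≤ B1) (hG : 0 ≤ G1)
    (hs : 0 ≤ s) (hT0 : 0 ≤ T) (hTle : T ≤ (B1 * s) ^ 2) (hGA : G1 * A1 ≤ B1) :
    Real.sqrt (T / (A1 ^ 2 + T)) ≤ B1 / A1 * s / Real.sqrt (1 + G1 ^ 2 * s ^ 2) := by
  have hden : (0:ℝ) < 1 + G1 ^ 2 * s ^ 2 := by positivity
  have hrhs : B1 / A1 * s / Real.sqrt (1 + G1 ^ 2 * s ^ 2)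
      = Real.sqrt ((B1 * s) ^ 2 / (A1 ^ 2 * (1 + G1 ^ 2 * s ^ 2))) := by
    rw [Real.sqrt_div (sq_nonneg _), Real.sqrt_mul (sq_nonneg A1),
      Real.sqrt_sq (by positivity), Real.sqrt_sq hA.le]
    field_simp
  rw [hrhs]
  apply Real.sqrt_le_sqrt
  have key : (G1 * A1 * s) ^ 2 ≤ (B1 * s) ^ 2 := by
    have h1 : G1 * A1 * s ≤ B1 * s := mul_le_mul_of_nonneg_right hGA hs
    have h2 : 0 ≤ G1 * A1 * s := by positivity
    nlinarith
  rw [div_le_div_iff₀ (by positivity) (by positivity)]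
  nlinarith [mul_le_mul_of_nonneg_left key hT0,
    mul_le_mul_of_nonneg_right hTle (sq_nonneg A1)]

lemma sandwich {n m' : ℕ} (V : Matrix (Fin n) (Fin n) ℝ) (hV : Vᵀ * V = 1)
    (f g : Fin n → ℝ) (W : Matrix (Fin n) (Fin m') ℝ) :
    (V * Matrix.diagonal f * Vᵀ) * (V * Matrix.diagonal g * W)
      = V * Matrix.diagonal (fun j => f j * g j) * W := by
  calc (V * Matrix.diagonal f * Vᵀ) * (V * Matrix.diagonal g * W)
      = V * (Matrix.diagonal f * ((Vᵀ * V) * (Matrix.diagonal g * W))) := by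
        simp only [Matrix.mul_assoc]
    _ = V * ((Matrix.diagonal f * Matrix.diagonal g) * W) := by
        rw [hV, Matrix.one_mul, Matrix.mul_assoc]
    _ = V * Matrix.diagonal (fun j => f j * g j) * W := by
        rw [Matrix.diagonal_mul_diagonal, Matrix.mul_assoc]

lemma svd_pow {m n : ℕ} (A U : Matrix (Fin m) (Fin n) ℝ) (V : Matrix (Fin n) (Fin n) ℝ)
    (σ : Fin n → ℝ) (hU : Uᵀ * U = 1) (hV : Vᵀ * V = 1)
    (hA : A = U * Matrix.diagonal σ * Vᵀ) (q : ℕ) :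
    (Aᵀ * A) ^ q * Aᵀ = V * Matrix.diagonal (fun j => σ j ^ (2 * q + 1)) * Uᵀ := by
  have hAt : Aᵀ = V * Matrix.diagonal σ * Uᵀ := by
    rw [hA]
    simp [Matrix.transpose_mul, Matrix.diagonal_transpose, Matrix.mul_assoc]
  have hAtA : Aᵀ * A = V * Matrix.diagonal (fun j => σ j * σ j) * Vᵀ := by
    rw [hAt, hA]
    calc (V * Matrix.diagonal σ * Uᵀ) * (U * Matrix.diagonal σ * Vᵀ)
        = V * (Matrix.diagonal σ * ((Uᵀ * U) * (Matrix.diagonal σ * Vᵀ))) := by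
          simp only [Matrix.mul_assoc]
      _ = V * ((Matrix.diagonal σ * Matrix.diagonal σ) * Vᵀ) := by
          rw [hU, Matrix.one_mul, Matrix.mul_assoc]
      _ = V * Matrix.diagonal (fun j => σ j * σ j) * Vᵀ := by
          rw [Matrix.diagonal_mul_diagonal, Matrix.mul_assoc]
  have hpow : ∀ r : ℕ, (Aᵀ * A) ^ r = V * Matrix.diagonal (fun j => σ j ^ (2 * r)) * Vᵀ := by
    intro r
    induction r with
    | zero =>
      rw [pow_zero,
        show (fun j : Fin n => σ j ^ (2 * 0)) = fun _ : Fin n => (1:ℝ) by funext j; simp,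
        Matrix.diagonal_one, Matrix.mul_one, mul_eq_one_comm.mp hV]
    | succ r ih =>
      rw [pow_succ, ih, hAtA, sandwich V hV,
        show (fun j : Fin n => σ j ^ (2 * r) * (σ j * σ j))
          = fun j => σ j ^ (2 * (r + 1)) by funext j; ring]
  rw [hpow q, hAt, sandwich V hV,
    show (fun j : Fin n => σ j ^ (2 * q) * σ j) = fun j => σ j ^ (2 * q + 1) by
      funext j; ring]

end RUQLPAux

set_option maxHeartbeats 2000000 in
theorem ruqlp_sin_angle_P_vi_bound
    (m n k p q : ℕ) (hmn : n ≤ m) (hk1 : 1 ≤ k) (hkn : k < n)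
    (d : ℕ) (hd : d = k + p) (hdn : d < n)
    (A U : Matrix (Fin m) (Fin n) ℝ) (V : Matrix (Fin n) (Fin n) ℝ) (σ : Fin n → ℝ)
    (hU : Uᵀ * U = 1) (hV : Vᵀ * V = 1)
    (hσ : Antitone σ) (hσ0 : ∀ i, 0 ≤ σ i)
    (hA : A = U * Matrix.diagonal σ * Vᵀ)
    (hgap : σ ⟨k, hkn⟩ < σ ⟨k - 1, by omega⟩)
    (Φ : Matrix (Fin m) (Fin d) ℝ)
    (Uk : Matrix (Fin m) (Fin k) ℝ) (hUk : Uk = U.submatrix id (Fin.castLE hkn.le))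
    (Uperp : Matrix (Fin m) (Fin (n - k)) ℝ)
    (hUperp : Uperp = U.submatrix id fun i => ⟨k + i.1, by have := i.2; omega⟩)
    (Φ1 : Matrix (Fin k) (Fin d) ℝ) (hΦ1 : Φ1 = Ukᵀ * Φ)
    (Φ2 : Matrix (Fin (n - k)) (Fin d) ℝ) (hΦ2 : Φ2 = Uperpᵀ * Φ)
    (hrank : Φ1.rank = k)
    (Pbar : Matrix (Fin n) (Fin d) ℝ) (hPbar : Pbarᵀ * Pbar = 1)
    (hPrange : LinearMap.range (Matrix.mulVecLin Pbar)
      = LinearMap.range (Matrix.mulVecLin ((Aᵀ * A) ^ q * Aᵀ * Φ)))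
    (Q : Matrix (Fin m) (Fin d) ℝ) (R : Matrix (Fin d) (Fin d) ℝ)
    (hQ : Qᵀ * Q = 1) (hQR : A * Pbar = Q * R)
    (hRtri : ∀ i j : Fin d, j < i → R i j = 0)
    (Ptil Rtil : Matrix (Fin d) (Fin d) ℝ)
    (hPtil : Ptilᵀ * Ptil = 1) (hQR2 : Rᵀ = Ptil * Rtil)
    (hRtil : ∀ i j : Fin d, j < i → Rtil i j = 0)
    (P : Matrix (Fin n) (Fin d) ℝ) (hP : P = Pbar * Ptil)
    (L : Matrix (Fin d) (Fin d) ℝ) (hL : L = Rtilᵀ)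
    :
    ∀ i : Fin k,
      vecNorm ((1 - P * Pᵀ).mulVec fun r => V r (Fin.castLE hkn.le i)) ≤
        (σ ⟨k, hkn⟩ / σ (Fin.castLE hkn.le i)) ^ (2 * q + 1) * specNorm (Φ2 * rowPinv Φ1) /
          Real.sqrt (1 + (σ ⟨n - 1, by omega⟩ / σ ⟨0, by omega⟩) ^ (4 * q + 2) * specNorm (Φ2 * rowPinv Φ1) ^ 2) := by
  intro i
  set s : ℝ := specNorm (Φ2 * rowPinv Φ1) with hs
  set i' : Fin n := Fin.castLE hkn.le i with hi'
  set v : Fin n → ℝ := fun r => V r i' with hv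
  -- positivity of σ i'
  have hile : i' ≤ (⟨k - 1, by omega⟩ : Fin n) := by
    rw [Fin.le_def]
    simp [hi']
    omega
  have ha : 0 < σ i' := lt_of_lt_of_le (lt_of_le_of_lt (hσ0 ⟨k, hkn⟩) hgap) (hσ hile)
  -- notation
  set e : Fin k → ℝ := Pi.single i 1 with he
  set x : Fin d → ℝ := rowPinv Φ1 *ᵥ e with hx
  set u : Fin (n - k) → ℝ := (Φ2 * rowPinv Φ1) *ᵥ e with hu
  set ω : Fin n → ℝ := (Uᵀ * Φ) *ᵥ x with hω
  set w : Fin n → ℝ := fun j => σ j ^ (2 * q + 1) * ω j with hw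
  set B : Matrix (Fin n) (Fin d) ℝ := (Aᵀ * A) ^ q * Aᵀ * Φ with hB
  set y : Fin n → ℝ := B *ᵥ x with hy0
  have hVdp : ∀ a b : Fin n → ℝ, (V *ᵥ a) ⬝ᵥ (V *ᵥ b) = a ⬝ᵥ b := by
    intro a b
    rw [dp_mulVec_left, mulVec_mulVec, hV, Matrix.one_mulVec]
  have hv' : v = V *ᵥ Pi.single i' 1 := by
    funext r
    rw [Matrix.mulVec_single_one]
    rfl
  -- the SVD form of B
  have hsvd : B = V * Matrix.diagonal (fun j => σ j ^ (2 * q + 1)) * (Uᵀ * Φ) := by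
    rw [hB, svd_pow A U V σ hU hV hA q, Matrix.mul_assoc, Matrix.mul_assoc]
  have hDω : (Matrix.diagonal fun j => σ j ^ (2 * q + 1)) *ᵥ ω = w := by
    funext j
    rw [hw]
    exact mulVec_diagonal _ _ _
  have hy : y = V *ᵥ w := by
    rw [hy0, hsvd, ← mulVec_mulVec, ← mulVec_mulVec, ← hω, hDω]
  -- rows of ω
  have hΦ1x : Φ1 *ᵥ x = e := by
    rw [hx, mulVec_mulVec, pinv_right Φ1 hrank, Matrix.one_mulVec]
  have hω1 : ∀ j : Fin k, ω (Fin.castLE hkn.le j) = e j := by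
    intro j
    have hrow : ∀ c, (Uᵀ * Φ) (Fin.castLE hkn.le j) c = Φ1 j c := by
      intro c
      rw [hΦ1, hUk]
      simp [Matrix.mul_apply]
    have : ω (Fin.castLE hkn.le j) = (Φ1 *ᵥ x) j := by
      rw [hω]
      simp only [Matrix.mulVec, dotProduct]
      exact Finset.sum_congr rfl fun c _ => by rw [hrow]
    rw [this, hΦ1x]
  have hω2 : ∀ j : Fin (n - k), ω ⟨k + j.1, by have := j.2; omega⟩ = u j := by
    intro j
    have hrow : ∀ c, (Uᵀ * Φ) ⟨k + j.1, by have := j.2; omega⟩ c = Φ2 j c := by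
      intro c
      rw [hΦ2, hUperp]
      simp [Matrix.mul_apply]
    have : ω ⟨k + j.1, by have := j.2; omega⟩ = (Φ2 *ᵥ x) j := by
      rw [hω]
      simp only [Matrix.mulVec, dotProduct]
      exact Finset.sum_congr rfl fun c _ => by rw [hrow]
    rw [this, hu, hx, mulVec_mulVec]
  -- main scalars
  set A1 : ℝ := σ i' ^ (2 * q + 1) with hA1
  set B1 : ℝ := σ ⟨k, hkn⟩ ^ (2 * q + 1) with hB1
  set G1 : ℝ := (σ ⟨n - 1, by omega⟩ / σ ⟨0, by omega⟩) ^ (2 * q + 1) with hG1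
  set T : ℝ := ∑ j : Fin (n - k), (σ ⟨k + j.1, by have := j.2; omega⟩ ^ (2 * q + 1) * u j) ^ 2
    with hT
  have hA1pos : 0 < A1 := pow_pos ha _
  have hT0 : 0 ≤ T := Finset.sum_nonneg fun _ _ => sq_nonneg _
  have hden : 0 < A1 ^ 2 + T := by positivity
  -- inner products
  have hωi : ω i' = 1 := by
    have := hω1 i
    rw [he, Pi.single_eq_same] at this
    exact this
  have hvy : v ⬝ᵥ y = A1 := by
    rw [hv', hy, hVdp, single_dotProduct, one_mul]
    simp only [hw]
    rw [hωi, mul_one]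
  have hvv : v ⬝ᵥ v = 1 := by
    rw [hv', hVdp, single_dotProduct, one_mul, Pi.single_eq_same]
  have hyy : y ⬝ᵥ y = A1 ^ 2 + T := by
    rw [hy, hVdp]
    have h1 : w ⬝ᵥ w = ∑ j, (w j) ^ 2 := by
      simp [dotProduct, sq]
    rw [h1, sum_split hkn.le (fun j => (w j) ^ 2)]
    have h2 : ∑ j : Fin k, (w (Fin.castLE hkn.le j)) ^ 2 = A1 ^ 2 := by
      rw [Finset.sum_eq_single i]
      · simp only [hw]
        rw [hω1 i, he, Pi.single_eq_same, mul_one, hA1]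
      · intro j _ hj
        simp only [hw]
        rw [hω1 j, he, Pi.single_eq_of_ne hj, mul_zero]
        simp
      · intro h; exact absurd (Finset.mem_univ i) h
    have h3 : ∑ j : Fin (n - k), (w ⟨k + j.1, by have := j.2; omega⟩) ^ 2 = T := by
      rw [hT]
      refine Finset.sum_congr rfl fun j _ => ?_
      simp only [hw]
      rw [hω2 j]
    rw [h2, h3]
  -- the projection vector
  have hymem : y ∈ LinearMap.range (Matrix.mulVecLin B) := ⟨x, by rw [Matrix.mulVecLin_apply, hy0]⟩
  rw [← hPrange] at hymem
  obtain ⟨c₀, hc₀⟩ := hymem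
  rw [Matrix.mulVecLin_apply] at hc₀
  set α : ℝ := A1 / (A1 ^ 2 + T) with hα
  set cc : Fin d → ℝ := α • (Ptilᵀ *ᵥ c₀) with hcc
  have hPtP : Pᵀ * P = 1 := by
    rw [hP, Matrix.transpose_mul, Matrix.mul_assoc, ← Matrix.mul_assoc Pbarᵀ, hPbar,
      Matrix.one_mul, hPtil]
  have hPcc : P *ᵥ cc = α • y := by
    rw [hcc, Matrix.mulVec_smul, mulVec_mulVec, hP, Matrix.mul_assoc,
      mul_eq_one_comm.mp hPtil, Matrix.mul_one, hc₀]
  have hrr : (v - P *ᵥ cc) ⬝ᵥ (v - P *ᵥ cc) = T / (A1 ^ 2 + T) := by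
    rw [hPcc]
    rw [sub_dotProduct, dotProduct_sub, dotProduct_sub,
      dotProduct_smul, smul_dotProduct, smul_dotProduct,
      dotProduct_smul, hvv, hvy, hyy, dotProduct_comm y v, hvy]
    simp only [smul_eq_mul, hα]
    field_simp
    ring
  -- bounding T
  have hs0 : 0 ≤ s := norm_nonneg _
  have hB10 : 0 ≤ B1 := pow_nonneg (hσ0 _) _
  have hG10 : 0 ≤ G1 := pow_nonneg (div_nonneg (hσ0 _) (hσ0 _)) _
  have hesq : vecNorm e = 1 := by
    rw [he]
    unfold vecNorm
    rw [Finset.sum_eq_single i]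
    · rw [Pi.single_eq_same]; simp
    · intro j _ hj; rw [Pi.single_eq_of_ne hj]; simp
    · intro h; exact absurd (Finset.mem_univ i) h
  have husum : ∑ j, u j ^ 2 ≤ s ^ 2 := by
    have h1 : vecNorm u ≤ s := by
      have := mulVec_norm_le (Φ2 * rowPinv Φ1) e
      rw [hesq, mul_one] at this
      rw [hu]
      exact this
    have h2 : (vecNorm u) ^ 2 ≤ s ^ 2 := pow_le_pow_left₀ (Real.sqrt_nonneg _) h1 2
    have h3 : (vecNorm u) ^ 2 = ∑ j, u j ^ 2 := by
      unfold vecNorm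
      exact Real.sq_sqrt (Finset.sum_nonneg fun _ _ => sq_nonneg _)
    rw [← h3]
    exact h2
  have hTle : T ≤ (B1 * s) ^ 2 := by
    have hstep : T ≤ ∑ j : Fin (n - k), B1 ^ 2 * u j ^ 2 := by
      rw [hT]
      refine Finset.sum_le_sum fun j _ => ?_
      have h1 : σ (⟨k + j.1, by have := j.2; omega⟩ : Fin n) ≤ σ ⟨k, hkn⟩ := by
        apply hσ
        rw [Fin.le_def]
        simp
      have h2 : σ (⟨k + j.1, by have := j.2; omega⟩ : Fin n) ^ (2 * q + 1) ≤ B1 :=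
        pow_le_pow_left₀ (hσ0 _) h1 _
      have h2' : (0:ℝ) ≤ σ (⟨k + j.1, by have := j.2; omega⟩ : Fin n) ^ (2 * q + 1) :=
        pow_nonneg (hσ0 _) _
      calc (σ (⟨k + j.1, by have := j.2; omega⟩ : Fin n) ^ (2 * q + 1) * u j) ^ 2
          = (σ (⟨k + j.1, by have := j.2; omega⟩ : Fin n) ^ (2 * q + 1)) ^ 2 * u j ^ 2 := by
            ring
        _ ≤ B1 ^ 2 * u j ^ 2 := by
            apply mul_le_mul_of_nonneg_right _ (sq_nonneg _)
            exact pow_le_pow_left₀ h2' h2 2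
    calc T ≤ ∑ j : Fin (n - k), B1 ^ 2 * u j ^ 2 := hstep
      _ = B1 ^ 2 * ∑ j, u j ^ 2 := by rw [Finset.mul_sum]
      _ ≤ B1 ^ 2 * s ^ 2 := mul_le_mul_of_nonneg_left husum (sq_nonneg _)
      _ = (B1 * s) ^ 2 := by ring
  -- G1 * A1 ≤ B1
  have h0pos : 0 < σ ⟨0, by omega⟩ := by
    apply lt_of_lt_of_le ha
    apply hσ
    rw [Fin.le_def]
    simp
  have hga : σ ⟨n - 1, by omega⟩ / σ ⟨0, by omega⟩ * σ i' ≤ σ ⟨k, hkn⟩ := by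
    rw [div_mul_eq_mul_div, div_le_iff₀ h0pos]
    have h1 : σ i' ≤ σ ⟨0, by omega⟩ := by
      apply hσ
      rw [Fin.le_def]
      simp
    have h2 : σ (⟨n - 1, by omega⟩ : Fin n) ≤ σ ⟨k, hkn⟩ := by
      apply hσ
      rw [Fin.le_def]
      simp
      omega
    exact mul_le_mul h2 h1 (hσ0 _) (hσ0 _)
  have hGA : G1 * A1 ≤ B1 := by
    rw [hG1, hA1, hB1, ← mul_pow]
    exact pow_le_pow_left₀ (mul_nonneg (div_nonneg (hσ0 _) (hσ0 _)) (hσ0 _)) hga _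
  -- conclusion
  have step1 := proj_le P hPtP v cc
  have step2 : vecNorm (v - P *ᵥ cc) = Real.sqrt (T / (A1 ^ 2 + T)) := by
    rw [vecNorm_eq_dp, hrr]
  have step3 := scalar_final A1 B1 G1 s T hA1pos hB10 hG10 hs0 hT0 hTle hGA
  have hfinal : B1 / A1 * s / Real.sqrt (1 + G1 ^ 2 * s ^ 2)
      = (σ ⟨k, hkn⟩ / σ i') ^ (2 * q + 1) * s /
        Real.sqrt (1 + (σ ⟨n - 1, by omega⟩ / σ ⟨0, by omega⟩) ^ (4 * q + 2) * s ^ 2) := by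
    rw [hB1, hA1, ← div_pow, hG1, ← pow_mul,
      show (2 * q + 1) * 2 = 4 * q + 2 by ring]
  calc vecNorm ((1 - P * Pᵀ) *ᵥ v) ≤ vecNorm (v - P *ᵥ cc) := step1
    _ = Real.sqrt (T / (A1 ^ 2 + T)) := step2
    _ ≤ B1 / A1 * s / Real.sqrt (1 + G1 ^ 2 * s ^ 2) := step3
    _ = _ := hfinal
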